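/- Let Λ be a ring with a direct sum decomposition Λ = P ⊕ Q as right Λ-modules, and let f : B → P be a right minimal right (add Q)-approximation of P (so B ∈ add Q). Assume that every endomorphism of P that is not an automorphism factors through f, and that every endomorphism u of P with u ∘ f = 0 is zero. Then every endomorphism γ of P* in the homotopy category K(Mod Λ) that is not an isomorphism factors through the chain map π : P* → B[0]; that is, γ = ψ ∘ π for some morphism ψ : B[0] → P* in K(Mod Λ). -/

import Mathlib

open CategoryTheory CategoryTheory.Limits

variable {Λ : Type} [Ring Λ]

/-- The category of right `Λ`-modules, as left modules over `Λᵐᵒᵖ`. -/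
abbrev RMod (Λ : Type) [Ring Λ] := ModuleCat Λᵐᵒᵖ

/-- `Λ` as a right module over itself. -/
abbrev regR (Λ : Type) [Ring Λ] : RMod Λ := ModuleCat.of Λᵐᵒᵖ Λ

/-- The graded pieces of a two-term complex concentrated in degrees 0 and 1. -/
def tX (B P : RMod Λ) : ℤ → RMod Λ
  | 0 => B
  | 1 => P
  | _ => ModuleCat.of Λᵐᵒᵖ PUnit

lemma tX0 (B P : RMod Λ) : tX B P 0 = B := rfl
lemma tX1 (B P : RMod Λ) : tX B P 1 = P := rfl

/-- The two-term cochain complex `P*` with `B` in degree 0, `P` in degree 1,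
differential `f`, and zeros elsewhere. -/
def twoTerm {B P : RMod Λ} (f : B ⟶ P) : CochainComplex (RMod Λ) ℤ where
  X := tX B P
  d i j := if h : i = 0 ∧ j = 1 then
      (eqToHom (by rw [h.1, tX0]) : tX B P i ⟶ B) ≫ f ≫
        (eqToHom (by rw [h.2, tX1]) : P ⟶ tX B P j)
    else 0
  shape i j hij := by
    try dsimp only
    rw [dif_neg]
    rintro ⟨rfl, rfl⟩
    exact hij rfl
  d_comp_d' i j k _ _ := by
    try dsimp only
    by_cases h : i = 0 ∧ j = 1
    · obtain ⟨rfl, rfl⟩ := h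
      rw [dif_neg (by rintro ⟨h1, -⟩; exact one_ne_zero h1 : ¬((1:ℤ) = 0 ∧ k = 1)), comp_zero]
    · rw [dif_neg h, zero_comp]

/-- The complex `M[0]`, with `M` concentrated in degree 0. -/
def sgl (M : RMod Λ) : CochainComplex (RMod Λ) ℤ := twoTerm (0 : M ⟶ ModuleCat.of Λᵐᵒᵖ PUnit)

/-- The homotopy category `K(Mod Λ)` of cochain complexes of right `Λ`-modules. -/
abbrev KMod (Λ : Type) [Ring Λ] := HomotopyCategory (RMod Λ) (ComplexShape.up ℤ)

/-- The quotient functor from complexes to the homotopy category. -/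
abbrev Kq : CochainComplex (RMod Λ) ℤ ⥤ KMod Λ := HomotopyCategory.quotient _ _

/-- The chain map `π : P* ⟶ B[0]` given by the identity of `B` in degree 0. -/
def projB {B P : RMod Λ} (f : B ⟶ P) : twoTerm f ⟶ sgl B where
  f i := if h : i = 0 then eqToHom (by rw [h]; rfl) else 0
  comm' i j hij := by
    try dsimp only
    by_cases h : i = 0
    · subst h
      obtain rfl : j = 1 := by simpa using hij.symm
      simp [twoTerm, sgl] <;> first | rfl | exact comp_zero.symm | exact zero_comp.symm
    · rw [dif_neg h, zero_comp]
      have hn : ¬(i = 0 ∧ j = 1) := fun hc => h hc.1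
      simp [twoTerm, dif_neg hn] <;> first | rfl | exact comp_zero.symm | exact zero_comp.symm

/-- The chain map `B[0] ⟶ P[0]` induced by `f : B ⟶ P`. -/
def sglMap {B P : RMod Λ} (f : B ⟶ P) : sgl B ⟶ sgl P where
  f i := if h : i = 0 then eqToHom (by rw [h]; rfl) ≫ f ≫ eqToHom (by rw [h]; rfl) else 0
  comm' i j hij := by
    try dsimp only
    by_cases h : i = 0
    · subst h
      obtain rfl : j = 1 := by simpa using hij.symm
      simp [sgl, twoTerm] <;> first | rfl | exact comp_zero.symm | exact zero_comp.symm
    · rw [dif_neg h, zero_comp]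
      have hn : ¬(i = 0 ∧ j = 1) := fun hc => h hc.1
      simp [sgl, twoTerm, dif_neg hn] <;> first | rfl | exact comp_zero.symm | exact zero_comp.symm

/-- `M` is in `add X`: it is a direct summand of a finite direct sum of copies of `X`. -/
def memAdd (X M : RMod Λ) : Prop :=
  ∃ (t : ℕ) (s : M ⟶ ⨁ (fun _ : Fin t => X)) (r : (⨁ (fun _ : Fin t => X)) ⟶ M),
    s ≫ r = 𝟙 M

/-- `f : B ⟶ P` is a right `add X`-approximation of `P`. -/
def IsRightApprox (X : RMod Λ) {B P : RMod Λ} (f : B ⟶ P) : Prop :=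
  memAdd X B ∧ ∀ B' : RMod Λ, memAdd X B' → ∀ g : B' ⟶ P, ∃ h : B' ⟶ B, h ≫ f = g

/-- `f : B ⟶ P` is right minimal. -/
def RightMinimal {B P : RMod Λ} (f : B ⟶ P) : Prop :=
  ∀ h : B ⟶ B, h ≫ f = f → IsIso h


lemma tX_subsingleton (B P : RMod Λ) (i : ℤ) (h0 : i ≠ 0) (h1 : i ≠ 1) :
    Subsingleton (tX B P i) := by
  unfold tX
  split
  · exact absurd rfl h0
  · exact absurd rfl h1
  · infer_instance

lemma hom_sub {X Y : RMod Λ} (h : Subsingleton Y) (a b : X ⟶ Y) : a = b := by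
  ext x; exact Subsingleton.elim _ _

lemma d01 {B P : RMod Λ} (f : B ⟶ P) : (twoTerm f).d 0 1 = f := by
  simp [twoTerm]
  erw [eqToHom_refl, eqToHom_refl, Category.id_comp, Category.comp_id]

lemma d_ne {B P : RMod Λ} (f : B ⟶ P) (i j : ℤ) (h : ¬(i = 0 ∧ j = 1)) :
    (twoTerm f).d i j = 0 := by
  simp [twoTerm, dif_neg h]
  rfl

/-- chain map between two-term complexes from a commuting square -/
def mk2 {B P B' P' : RMod Λ} (f : B ⟶ P) (f' : B' ⟶ P') (g0 : B ⟶ B') (g1 : P ⟶ P')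
    (hc : g0 ≫ f' = f ≫ g1) : twoTerm f ⟶ twoTerm f' where
  f i := if h0 : i = 0 then
      (eqToHom (by rw [h0]; rfl) : tX B P i ⟶ B) ≫ g0 ≫ (eqToHom (by rw [h0]; rfl) : B' ⟶ tX B' P' i)
    else if h1 : i = 1 then
      (eqToHom (by rw [h1]; rfl) : tX B P i ⟶ P) ≫ g1 ≫ (eqToHom (by rw [h1]; rfl) : P' ⟶ tX B' P' i)
    else 0
  comm' i j hij := by
    try dsimp only
    by_cases h0 : i = 0
    · subst h0
      obtain rfl : j = 1 := by simpa using hij.symm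
      simp [twoTerm, hc]
      rw [← Category.assoc g0, hc, Category.assoc]
    · by_cases h1 : i = 1
      · subst h1
        obtain rfl : j = 2 := by simpa using hij.symm
        rw [d_ne f 1 2 (by norm_num), d_ne f' 1 2 (by norm_num), zero_comp, comp_zero]
      · rw [dif_neg h0, dif_neg h1, zero_comp,
          d_ne f i j (fun hc' => h0 hc'.1), zero_comp]

@[simp] lemma mk2_f0 {B P B' P' : RMod Λ} (f : B ⟶ P) (f' : B' ⟶ P') (g0 : B ⟶ B') (g1 : P ⟶ P')
    (hc : g0 ≫ f' = f ≫ g1) : (mk2 f f' g0 g1 hc).f 0 = g0 := by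
  simp only [mk2, dif_pos rfl, eqToHom_refl]
  exact (Category.comp_id g0) ▸ Category.id_comp (g0 ≫ 𝟙 B')

@[simp] lemma mk2_f1 {B P B' P' : RMod Λ} (f : B ⟶ P) (f' : B' ⟶ P') (g0 : B ⟶ B') (g1 : P ⟶ P')
    (hc : g0 ≫ f' = f ≫ g1) : (mk2 f f' g0 g1 hc).f 1 = g1 := by
  simp only [mk2, dif_pos rfl, eqToHom_refl]
  exact (Category.comp_id g1) ▸ Category.id_comp (g1 ≫ 𝟙 P')

lemma iso_of_two {C : Type*} [Category C] {X Y : C} (g : X ⟶ Y) (k : Y ⟶ X)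
    (h1 : IsIso (k ≫ g)) (h2 : IsIso (g ≫ k)) : IsIso g := by
  have l : (inv (k ≫ g) ≫ k) ≫ g = 𝟙 _ := by
    rw [Category.assoc, IsIso.inv_hom_id]
  have r : g ≫ (k ≫ inv (g ≫ k)) = 𝟙 _ := by
    rw [← Category.assoc, IsIso.hom_inv_id]
  have heq : k ≫ inv (g ≫ k) = inv (k ≫ g) ≫ k := by
    calc k ≫ inv (g ≫ k) = ((inv (k ≫ g) ≫ k) ≫ g) ≫ (k ≫ inv (g ≫ k)) := by
          rw [l, Category.id_comp]
      _ = (inv (k ≫ g) ≫ k) ≫ (g ≫ (k ≫ inv (g ≫ k))) := by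
          simp only [Category.assoc]
      _ = inv (k ≫ g) ≫ k := by rw [r, Category.comp_id]
  exact ⟨⟨k ≫ inv (g ≫ k), r, by rw [heq]; exact l⟩⟩

/-- The chain map `π`, degree 0 component. -/
lemma projB_f0 {B P : RMod Λ} (f : B ⟶ P) : (projB f).f 0 = 𝟙 B := by
  simp only [projB, dif_pos rfl, eqToHom_refl]
  rfl

lemma projB_f1 {B P : RMod Λ} (f : B ⟶ P) : (projB f).f 1 = 0 := by
  simp [projB]

/-- Let `Λ = P ⊕ Q` as right `Λ`-modules and let `f : B ⟶ P` be a right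
minimal right `add Q`-approximation of `P`. Assume every endomorphism of `P` which is not an
automorphism factors through `f`, and every endomorphism `u` of `P` with `u ∘ f = 0` is zero.
Then every non-isomorphism endomorphism `γ` of `P*` in `K(Mod Λ)` factors through
`π : P* ⟶ B[0]`. -/
theorem nonIso_endo_factors_through_approximation
    (Λ : Type) [Ring Λ] (P Q B : RMod Λ)
    (decomp : regR Λ ≅ P ⊞ Q)
    (f : B ⟶ P) (happrox : IsRightApprox Q f) (hmin : RightMinimal f)
    (hfact : ∀ β : P ⟶ P, ¬ IsIso β → ∃ δ : P ⟶ B, δ ≫ f = β)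
    (hvanish : ∀ u : P ⟶ P, f ≫ u = 0 → u = 0) :
    ∀ γ : (Kq).obj (twoTerm f) ⟶ (Kq).obj (twoTerm f), ¬ IsIso γ →
      ∃ ψ : (Kq).obj (sgl B) ⟶ (Kq).obj (twoTerm f), γ = (Kq).map (projB f) ≫ ψ := by
  intro γ hγ
  obtain ⟨g, hg⟩ := (Kq).map_surjective γ
  let g0 : B ⟶ B := g.f 0
  let g1 : P ⟶ P := g.f 1
  have hg0 : g0 = g.f 0 := rfl
  have hg1 : g1 = g.f 1 := rfl
  have comm : g0 ≫ f = f ≫ g1 := by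
    have h := g.comm 0 1
    rw [d01] at h
    exact h
  by_cases h1 : IsIso g1
  · refine absurd ?_ hγ
    obtain ⟨k0, hk0⟩ := happrox.2 B happrox.1 (f ≫ inv g1)
    have hA : (k0 ≫ g0) ≫ f = f := by
      rw [Category.assoc, comm, ← Category.assoc, hk0, Category.assoc,
        IsIso.inv_hom_id, Category.comp_id]
    have hB : (g0 ≫ k0) ≫ f = f := by
      rw [Category.assoc, hk0, ← Category.assoc, comm, Category.assoc,
        IsIso.hom_inv_id, Category.comp_id]
    have iso0 : IsIso g0 := iso_of_two g0 k0 (hmin _ hA) (hmin _ hB)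
    have : ∀ n : ℤ, IsIso (g.f n) := by
      intro n
      by_cases hn0 : n = 0
      · subst hn0; exact iso0
      · by_cases hn1 : n = 1
        · subst hn1; exact h1
        · have hs := tX_subsingleton B P n hn0 hn1
          rw [hom_sub hs (g.f n) (𝟙 _)]
          infer_instance
    have : IsIso g := HomologicalComplex.Hom.isIso_of_components g
    rw [← hg]
    infer_instance
  · obtain ⟨δ, hδ⟩ := hfact g1 h1
    have hψf : (g0 - f ≫ δ) ≫ f = 0 := by
      rw [Preadditive.sub_comp, comm, Category.assoc, hδ, sub_self]
    let ψc : sgl B ⟶ twoTerm f :=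
      mk2 (0 : B ⟶ ModuleCat.of Λᵐᵒᵖ PUnit) f (g0 - f ≫ δ) 0
        (by rw [hψf, zero_comp])
    have H : Homotopy g (projB f ≫ ψc) :=
      { hom := fun i j => if h : i = 1 ∧ j = 0 then
            (eqToHom (by rw [h.1]; rfl) : tX B P i ⟶ P) ≫ δ ≫
              (eqToHom (by rw [h.2]; rfl) : B ⟶ tX B P j)
          else 0
        zero := fun i j hij => by
          try dsimp only
          rw [dif_neg]
          rintro ⟨rfl, rfl⟩
          exact hij rfl
        comm := fun i => by
          by_cases hi0 : i = 0
          · subst hi0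
            rw [dNext_eq _ (show (ComplexShape.up ℤ).Rel 0 1 by simp),
              prevD_eq _ (show (ComplexShape.up ℤ).Rel (-1) 0 by simp)]
            rw [dif_pos ⟨rfl, rfl⟩, dif_neg (by norm_num)]
            simp only [eqToHom_refl, Category.id_comp, Category.comp_id, zero_comp, comp_zero,
              zero_add, add_zero, d01, HomologicalComplex.comp_f, projB_f0, mk2_f0, ψc]
            rw [← hg0]
            have h' : g0 = f ≫ 𝟙 P ≫ δ + 𝟙 B ≫ (g0 - f ≫ δ) := by
              rw [Category.id_comp δ, Category.id_comp]
              abel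
            exact h'
          · by_cases hi1 : i = 1
            · subst hi1
              rw [dNext_eq _ (show (ComplexShape.up ℤ).Rel 1 2 by simp),
                prevD_eq _ (show (ComplexShape.up ℤ).Rel 0 1 by simp)]
              rw [d_ne f 1 2 (by norm_num), zero_comp, dif_pos ⟨rfl, rfl⟩]
              simp only [eqToHom_refl, Category.id_comp, Category.comp_id, zero_comp, comp_zero,
                zero_add, add_zero, d01, HomologicalComplex.comp_f, projB_f1]
              rw [← hg1]
              exact hδ.symm
            · exact hom_sub (tX_subsingleton B P i hi0 hi1) _ _ }
    refine ⟨(Kq).map ψc, ?_⟩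
    rw [← hg, ← Functor.map_comp]
    exact HomotopyCategory.eq_of_homotopy _ _ H
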